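/- Let X be an ultraparacompact Hausdorff space and let Y be a compact zero-dimensional Hausdorff space. Then the product space X × Y is ultraparacompact. -/
import Mathlib


/-- A partition of the space `X` into (nonempty, pairwise disjoint) clopen sets. -/
def IsClopenPartition (X : Type*) [TopologicalSpace X] (P : Set (Set X)) : Prop :=
  (∀ S ∈ P, IsClopen S) ∧ (∀ S ∈ P, S.Nonempty) ∧
    (∀ S ∈ P, ∀ T ∈ P, S ≠ T → S ∩ T = ∅) ∧ ⋃₀ P = Set.univ

/-- A space is ultraparacompact if every open cover has a refinement that is a
partition of the space into clopen sets. -/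
def Ultraparacompact (X : Type*) [TopologicalSpace X] : Prop :=
  ∀ 𝒰 : Set (Set X), (∀ U ∈ 𝒰, IsOpen U) → ⋃₀ 𝒰 = Set.univ →
    ∃ P : Set (Set X), IsClopenPartition X P ∧ ∀ S ∈ P, ∃ U ∈ 𝒰, S ⊆ U

/-- A space is ultranormal if any two disjoint closed sets are separated by a clopen set. -/
def Ultranormal (X : Type*) [TopologicalSpace X] : Prop :=
  ∀ R S : Set X, IsClosed R → IsClosed S → Disjoint R S →
    ∃ C : Set X, IsClopen C ∧ R ⊆ C ∧ S ∩ C = ∅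

/-- A space is zero-dimensional if the clopen sets form a basis for the topology. -/
def ZeroDimensional (X : Type*) [TopologicalSpace X] : Prop :=
  TopologicalSpace.IsTopologicalBasis {s : Set X | IsClopen s}

/-- The product of an ultraparacompact Hausdorff space with a compact zero-dimensional
Hausdorff space is ultraparacompact. -/
theorem ultraparacompact_prod_compact_zeroDimensional (X Y : Type*)
    [TopologicalSpace X] [T2Space X] (hX : Ultraparacompact X)
    [TopologicalSpace Y] [T2Space Y] [CompactSpace Y] (hY : ZeroDimensional Y) :
    Ultraparacompact (X × Y) := by
  simp only [Ultraparacompact, IsClopenPartition, ZeroDimensional] at hX hY ⊢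
  intro 𝒰 hopen hcov
  classical
  rcases isEmpty_or_nonempty X with hE | hNE
  · haveI : IsEmpty (X × Y) := ⟨fun p => hE.elim p.1⟩
    refine ⟨∅, ⟨by simp, by simp, by simp, ?_⟩, by simp⟩
    simp [Set.eq_empty_of_isEmpty (Set.univ : Set (X × Y))]
  -- Step 1: per-point basic data
  have key : ∀ x : X, ∀ y : Y, ∃ (A : Set X) (B : Set Y) (U : Set (X × Y)),
      U ∈ 𝒰 ∧ IsOpen A ∧ IsClopen B ∧ x ∈ A ∧ y ∈ B ∧ A ×ˢ B ⊆ U := by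
    intro x y
    have hm : (x, y) ∈ ⋃₀ 𝒰 := hcov ▸ Set.mem_univ _
    obtain ⟨U, hU, hxy⟩ := hm
    obtain ⟨u, v, hu, hv, hxu, hyv, huv⟩ := isOpen_prod_iff.mp (hopen U hU) x y hxy
    obtain ⟨B, hB, hyB, hBv⟩ := hY.exists_subset_of_mem_open hyv hv
    exact ⟨u, B, U, hU, hu, hB, hxu, hyB, fun p hp => huv ⟨hp.1, hBv hp.2⟩⟩
  choose A B U hU hA hB hxA hyB hsub using key
  -- Step 2: compactness of Y
  have hcpt : ∀ x : X, ∃ tt : Finset Y, (Set.univ : Set Y) ⊆ ⋃ y ∈ tt, B x y := fun x =>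
    isCompact_univ.elim_finite_subcover (B x) (fun y => (hB x y).isOpen)
      (fun y _ => Set.mem_iUnion.mpr ⟨y, hyB x y⟩)
  choose t ht using hcpt
  set W : X → Set X := fun x => ⋂ y ∈ t x, A x y with hWdef
  have hWopen : ∀ x : X, IsOpen (W x) := fun x => isOpen_biInter_finset (fun y _ => hA x y)
  have hxW : ∀ x : X, x ∈ W x := fun x => Set.mem_iInter₂.mpr (fun y _ => hxA x y)
  -- atoms
  set Atom : X → (Y → Bool) → Set Y :=
    fun x f => ⋂ y ∈ t x, (if f y then B x y else (B x y)ᶜ) with hAtomdef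
  have hAtomClopen : ∀ (x : X) (f : Y → Bool), IsClopen (Atom x f) := by
    intro x f
    apply (t x).finite_toSet.isClopen_biInter
    intro y _
    by_cases h : f y <;> simp [h, hB x y, (hB x y).compl]
  have hmemAtom : ∀ (x : X) (f : Y → Bool) (b : Y),
      b ∈ Atom x f ↔ ∀ y ∈ t x, (f y = true ↔ b ∈ B x y) := by
    intro x f b
    simp only [hAtomdef, Set.mem_iInter]
    constructor
    · intro h y hy
      have := h y hy
      by_cases hf : f y <;> simp [hf] at this ⊢ <;> tauto
    · intro h y hy
      have := h y hy
      by_cases hf : f y <;> simp [hf] at this ⊢ <;> tauto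
  have hAtomEq : ∀ (x : X) (f g : Y → Bool) (b : Y),
      b ∈ Atom x f → b ∈ Atom x g → Atom x f = Atom x g := by
    intro x f g b hbf hbg
    rw [hmemAtom] at hbf hbg
    apply Set.iInter₂_congr
    intro y hy
    have h1 := hbf y hy
    have h2 := hbg y hy
    by_cases hf : f y <;> by_cases hg : g y <;> simp_all
  have hAtomMemSelf : ∀ (x : X) (b : Y), b ∈ Atom x (fun y => decide (b ∈ B x y)) := by
    intro x b
    rw [hmemAtom]
    intro y _
    simp
  have hAtomSub : ∀ (x : X) (f : Y → Bool), (Atom x f).Nonempty →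
      ∃ y ∈ t x, f y = true ∧ Atom x f ⊆ B x y := by
    intro x f ⟨b, hb⟩
    obtain ⟨y, hy, hby⟩ := Set.mem_iUnion₂.mp (ht x (Set.mem_univ b))
    refine ⟨y, hy, ((hmemAtom x f b).mp hb y hy).mpr hby, ?_⟩
    intro z hz
    exact ((hmemAtom x f z).mp hz y hy).mp (((hmemAtom x f b).mp hb y hy).mpr hby)
  -- Step 3: apply ultraparacompactness of X
  obtain ⟨PX, ⟨hPXclopen, hPXne, hPXdisj, hPXcov⟩, hPXref⟩ :=
    hX (Set.range W) (by rintro _ ⟨x, rfl⟩; exact hWopen x)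
      (Set.eq_univ_of_forall fun x => ⟨W x, ⟨x, rfl⟩, hxW x⟩)
  have hc : ∀ S ∈ PX, ∃ x, S ⊆ W x := by
    intro S hS
    obtain ⟨_, ⟨x, rfl⟩, hsub'⟩ := hPXref S hS
    exact ⟨x, hsub'⟩
  choose! c hcW using hc
  -- Step 4: the partition of X × Y
  refine ⟨{T | ∃ S ∈ PX, ∃ f : Y → Bool, (Atom (c S) f).Nonempty ∧ T = S ×ˢ Atom (c S) f},
    ⟨?_, ?_, ?_, ?_⟩, ?_⟩
  · rintro _ ⟨S, hS, f, hne, rfl⟩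
    exact (hPXclopen S hS).prod (hAtomClopen (c S) f)
  · rintro _ ⟨S, hS, f, hne, rfl⟩
    exact (hPXne S hS).prod hne
  · rintro T ⟨S, hS, f, hne, rfl⟩ T' ⟨S', hS', f', hne', rfl⟩ hTT'
    by_contra hinter
    obtain ⟨⟨a, b⟩, hab⟩ := Set.nonempty_iff_ne_empty.mpr hinter
    obtain ⟨⟨ha1, hb1⟩, ha2, hb2⟩ := hab
    have hSS' : S = S' := by
      by_contra hne''
      have := hPXdisj S hS S' hS' hne''
      exact absurd (Set.mem_inter ha1 ha2) (by rw [this]; exact Set.notMem_empty a)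
    subst hSS'
    exact hTT' (by rw [hAtomEq (c S) f f' b hb1 hb2])
  · apply Set.eq_univ_of_forall
    rintro ⟨a, b⟩
    have ha : a ∈ ⋃₀ PX := hPXcov ▸ Set.mem_univ a
    obtain ⟨S, hS, haS⟩ := ha
    refine ⟨S ×ˢ Atom (c S) (fun y => decide (b ∈ B (c S) y)),
      ⟨S, hS, _, ⟨b, hAtomMemSelf (c S) b⟩, rfl⟩, haS, hAtomMemSelf (c S) b⟩
  · rintro _ ⟨S, hS, f, hne, rfl⟩
    obtain ⟨y, hy, hfy, hatomsub⟩ := hAtomSub (c S) f hne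
    refine ⟨U (c S) y, hU (c S) y, ?_⟩
    rintro ⟨a, b⟩ ⟨haS, hb⟩
    exact hsub (c S) y ⟨Set.mem_iInter₂.mp (hcW S hS haS) y hy, hatomsub hb⟩
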